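/- arXiv:2509.15679 — 3 statements merged into one kernel-verified Lean document; each statement's English description precedes it below -/
import Mathlib

section
/- Let (W, ω) be a real symplectic vector space and let c : W → W be an invertible linear map that maps every Lagrangian subspace of W to a Lagrangian subspace. Then there exists a nonzero real number λ_c such that ω(c(u), c(v)) = λ_c · ω(u, v) for all u, v ∈ W. -/
open LinearMap FiniteDimensional

section aux

variable {W : Type*} [AddCommGroup W] [Module ℝ W] [FiniteDimensional ℝ W]
  (ω : LinearMap.BilinForm ℝ W)

/-- Any pair of ω-orthogonal vectors lies in a common Lagrangian. -/
lemma exists_lagrangian (halt : ω.IsAlt) {u v : W} (huv : ω u v = 0) :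
    ∃ Λ : Submodule ℝ W, Λ = ω.orthogonal Λ ∧ u ∈ Λ ∧ v ∈ Λ := by
  have hvu : ω v u = 0 := by rw [← LinearMap.IsAlt.neg halt u v, huv, neg_zero]
  -- isotropic submodules containing u and v
  set A : Set (Submodule ℝ W) :=
    {Λ | (∀ x ∈ Λ, ∀ y ∈ Λ, ω x y = 0) ∧ u ∈ Λ ∧ v ∈ Λ} with hA
  have hspan : Submodule.span ℝ {u, v} ∈ A := by
    refine ⟨?_, Submodule.subset_span (by simp), Submodule.subset_span (by simp)⟩
    intro x hx y hy
    obtain ⟨a, b, rfl⟩ := Submodule.mem_span_pair.1 hx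
    obtain ⟨a', b', rfl⟩ := Submodule.mem_span_pair.1 hy
    simp only [map_add, map_smul, LinearMap.add_apply, LinearMap.smul_apply, smul_eq_mul,
      huv, hvu, halt u, halt v]
    ring
  set T : Set ℕ := (fun Λ : Submodule ℝ W => Module.finrank ℝ Λ) '' A with hT
  have hTne : T.Nonempty := ⟨_, ⟨_, hspan, rfl⟩⟩
  have hTbdd : BddAbove T := by
    refine ⟨Module.finrank ℝ W, ?_⟩
    rintro n ⟨Λ, _, rfl⟩
    exact Submodule.finrank_le Λ
  obtain ⟨Λ, hΛA, hΛrank⟩ := Nat.sSup_mem hTne hTbdd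
  refine ⟨Λ, ?_, hΛA.2.1, hΛA.2.2⟩
  apply le_antisymm
  · intro x hx n hn
    exact hΛA.1 n hn x hx
  · -- maximality: orthogonal Λ ≤ Λ
    intro x hx
    by_contra hxΛ
    set Λ' := Λ ⊔ Submodule.span ℝ {x} with hΛ'
    have hxo : ∀ n ∈ Λ, ω n x = 0 := fun n hn =>
      (LinearMap.BilinForm.mem_orthogonal_iff.1 hx) n hn
    have hΛ'A : Λ' ∈ A := by
      refine ⟨?_, Submodule.mem_sup_left hΛA.2.1, Submodule.mem_sup_left hΛA.2.2⟩
      intro y hy z hz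
      obtain ⟨a, ha, y', hy', rfl⟩ := Submodule.mem_sup.1 hy
      obtain ⟨b, hb, z', hz', rfl⟩ := Submodule.mem_sup.1 hz
      obtain ⟨r, rfl⟩ := Submodule.mem_span_singleton.1 hy'
      obtain ⟨s, rfl⟩ := Submodule.mem_span_singleton.1 hz'
      have hxa : ω x b = 0 := by rw [← LinearMap.IsAlt.neg halt b x, hxo b hb, neg_zero]
      simp only [map_add, map_smul, LinearMap.add_apply, LinearMap.smul_apply, smul_eq_mul,
        hΛA.1 a ha b hb, hxo a ha, hxa, halt x]
      ring
    have hlt : Λ < Λ' := by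
      refine lt_of_le_of_ne le_sup_left fun h => hxΛ ?_
      rw [h]
      exact Submodule.mem_sup_right (Submodule.mem_span_singleton_self x)
    have h1 : Module.finrank ℝ Λ < Module.finrank ℝ Λ' :=
      Submodule.finrank_lt_finrank_of_lt hlt
    have h2 : Module.finrank ℝ Λ' ≤ sSup T := le_csSup hTbdd ⟨Λ', hΛ'A, rfl⟩
    have h3 : Module.finrank ℝ Λ = sSup T := hΛrank
    omega

end aux

/-- An invertible linear map of a (finite-dimensional, real) symplectic
vector space `(W, ω)` that maps every Lagrangian subspace to a Lagrangian subspace is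
conformal symplectic: there is a nonzero `l` with `ω (c u) (c v) = l * ω u v`. -/
theorem stmt0 (W : Type*) [AddCommGroup W] [Module ℝ W] [FiniteDimensional ℝ W]
    (ω : LinearMap.BilinForm ℝ W) (hnd : ω.Nondegenerate) (halt : ω.IsAlt)
    (c : W ≃ₗ[ℝ] W)
    (hc : ∀ Λ : Submodule ℝ W, Λ = ω.orthogonal Λ →
      Submodule.map (c : W →ₗ[ℝ] W) Λ = ω.orthogonal (Submodule.map (c : W →ₗ[ℝ] W) Λ)) :
    ∃ l : ℝ, l ≠ 0 ∧ ∀ u v : W, ω (c u) (c v) = l * ω u v := by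
  -- Key fact: c preserves ω-orthogonality
  have K : ∀ u v : W, ω u v = 0 → ω (c u) (c v) = 0 := by
    intro u v huv
    obtain ⟨Λ, hΛ, hu, hv⟩ := exists_lagrangian ω halt huv
    have h := hc Λ hΛ
    have hcv : c v ∈ ω.orthogonal (Submodule.map (c : W →ₗ[ℝ] W) Λ) := by
      rw [← h]; exact Submodule.mem_map_of_mem hv
    exact (LinearMap.BilinForm.mem_orthogonal_iff.1 hcv) (c u) (Submodule.mem_map_of_mem hu)
  -- trivial case: ω ≡ 0 forces W = 0
  by_cases htriv : ∀ u v : W, ω u v = 0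
  · refine ⟨1, one_ne_zero, fun u v => ?_⟩
    rw [htriv (c u) (c v), htriv u v, mul_zero]
  push_neg at htriv
  obtain ⟨u₀, v₀, h₀⟩ := htriv
  -- ratio independence with fixed first argument
  have L1 : ∀ u v v' : W, ω u v ≠ 0 → ω u v' ≠ 0 →
      ω (c u) (c v) * ω u v' = ω (c u) (c v')  * ω u v := by
    intro u v v' h h'
    have hw : ω u (ω u v' • v - ω u v • v') = 0 := by
      simp only [map_sub, map_smul, smul_eq_mul]
      ring
    have := K u _ hw
    simp only [map_sub, map_smul, LinearMap.sub_apply, LinearMap.smul_apply, smul_eq_mul] at this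
    linarith
  -- swap
  have L2 : ∀ u v : W, ω (c v) (c u) = - ω (c u) (c v) ∧ ω v u = - ω u v := by
    intro u v
    exact ⟨(LinearMap.IsAlt.neg halt (c u) (c v)).symm, (LinearMap.IsAlt.neg halt u v).symm⟩
  set l : ℝ := ω (c u₀) (c v₀) / ω u₀ v₀ with hl
  -- the main identity when ω u v ≠ 0
  have main : ∀ u v : W, ω u v ≠ 0 → ω (c u) (c v) = l * ω u v := by
    intro u v huv
    -- find w with ω u w ≠ 0 and ω u₀ w ≠ 0
    obtain ⟨w, hw1, hw2⟩ : ∃ w, ω u w ≠ 0 ∧ ω u₀ w ≠ 0 := by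
      by_cases h1 : ω u₀ v ≠ 0
      · exact ⟨v, huv, h1⟩
      by_cases h2 : ω u v₀ ≠ 0
      · exact ⟨v₀, h2, h₀⟩
      push_neg at h1 h2
      refine ⟨v + v₀, ?_, ?_⟩ <;> simp only [map_add, h1, h2] <;> simpa
    have hw1' : ω w u ≠ 0 := by rw [(L2 u w).2]; exact neg_ne_zero.2 hw1
    have hw2' : ω w u₀ ≠ 0 := by rw [(L2 u₀ w).2]; exact neg_ne_zero.2 hw2
    -- chain of equal ratios
    have e1 := L1 u v w huv hw1
    have e2 := L1 w u u₀ hw1' hw2'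
    have e3 := L1 u₀ w v₀ hw2 (fun h => h₀ h)
    rw [(L2 u w).1, (L2 u w).2, (L2 u₀ w).1, (L2 u₀ w).2] at e2
    -- combine: ω(cu)(cv)/ωuv = ω(cu)(cw)/ωuw = ω(cu₀)(cw)/ωu₀w = l
    have hbd : ω u w * ω u₀ w ≠ 0 := mul_ne_zero hw1 hw2
    have key' : ω (c u) (c v) * ω u₀ v₀ * (ω u w * ω u₀ w)
        = ω (c u₀) (c v₀) * ω u v * (ω u w * ω u₀ w) := by
      linear_combination (ω u₀ v₀ * ω u₀ w) * e1 + (ω u v * ω u₀ v₀) * e2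
        + (ω u v * ω u w) * e3
    have key : ω (c u) (c v) * ω u₀ v₀ = ω (c u₀) (c v₀) * ω u v :=
      mul_right_cancel₀ hbd key'
    rw [hl]
    field_simp
    linarith [key]
  have final : ∀ u v : W, ω (c u) (c v) = l * ω u v := by
    intro u v
    by_cases huv : ω u v = 0
    · rw [huv, mul_zero]; exact K u v huv
    · exact main u v huv
  refine ⟨l, ?_, final⟩
  -- l ≠ 0 via nondegeneracy
  intro hl0
  obtain ⟨w, hw⟩ : ∃ w, ω (c u₀) w ≠ 0 := by
    by_contra h
    push_neg at h
    have hcz : c u₀ = 0 := hnd.1 _ h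
    have hu₀ : u₀ = 0 := by simpa using hcz
    apply h₀
    rw [hu₀, map_zero, LinearMap.zero_apply]
  have := final u₀ (c.symm w)
  rw [hl0, zero_mul, LinearEquiv.apply_symm_apply] at this
  exact hw this
end

section
/- Let n ≥ 1 and let S : I → Sym(n, ℝ) be a smooth curve of symmetric n×n matrices defined on an open interval I, and let Γ(t) = {(x, S_t x) : x ∈ ℝⁿ} be the corresponding curve of Lagrangian subspaces in ℝ²ⁿ with the standard symplectic form. For v₀ = (x₀, S_{t₀} x₀) ∈ Γ(t₀) and any smooth curve v(t) ∈ Γ(t) with v(t₀) = v₀, the value ω(v₀, v'(t₀)) equals x₀ᵀ S'_{t₀} x₀; in particular it is independent of the choice of the curve v. -/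
open Matrix

attribute [local instance] Matrix.normedAddCommGroup Matrix.normedSpace

/-- The standard symplectic form on `ℝⁿ × ℝⁿ`. -/
def stdOmega (n : ℕ) (p q : (Fin n → ℝ) × (Fin n → ℝ)) : ℝ :=
  p.1 ⬝ᵥ q.2 - q.1 ⬝ᵥ p.2

/-- for a smooth curve of symmetric matrices `S` and the corresponding
curve of Lagrangian graphs `Γ(t) = {(x, S_t x)}`, for any differentiable curve
`v(t) ∈ Γ(t)` with `v(t₀) = (x₀, S_{t₀} x₀)`, the value `ω(v(t₀), v'(t₀))` equals
`x₀ᵀ S'_{t₀} x₀`; in particular it does not depend on the chosen curve `v`. -/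
theorem stmt5 (n : ℕ) (I : Set ℝ) (hI : IsOpen I) (t₀ : ℝ) (ht₀ : t₀ ∈ I)
    (S : ℝ → Matrix (Fin n) (Fin n) ℝ) (S' : Matrix (Fin n) (Fin n) ℝ)
    (hSsym : ∀ t ∈ I, (S t)ᵀ = S t)
    (hS : HasDerivAt S S' t₀)
    (x₀ : Fin n → ℝ)
    (v : ℝ → (Fin n → ℝ) × (Fin n → ℝ)) (v' : (Fin n → ℝ) × (Fin n → ℝ))
    (hvmem : ∀ t ∈ I, (v t).2 = (S t).mulVec ((v t).1))
    (hv₀ : v t₀ = (x₀, (S t₀).mulVec x₀))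
    (hv : HasDerivAt v v' t₀) :
    stdOmega n (v t₀) v' = x₀ ⬝ᵥ S'.mulVec x₀ := by
  -- components of v
  have hv1 : HasDerivAt (fun t => (v t).1) v'.1 t₀ := hv.fst
  have hv2 : HasDerivAt (fun t => (v t).2) v'.2 t₀ := hv.snd
  -- entries of S
  have hSij : ∀ i j, HasDerivAt (fun t => S t i j) (S' i j) t₀ := by
    intro i j
    exact (hasDerivAt_pi.mp (hasDerivAt_pi.mp hS i) j)
  have hv1j : ∀ j, HasDerivAt (fun t => (v t).1 j) (v'.1 j) t₀ :=
    fun j => hasDerivAt_pi.mp hv1 j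
  have hx : (v t₀).1 = x₀ := by rw [hv₀]
  -- derivative of t ↦ S t * (v t).1
  have hprod : HasDerivAt (fun t => (S t).mulVec ((v t).1))
      (S'.mulVec x₀ + (S t₀).mulVec v'.1) t₀ := by
    rw [hasDerivAt_pi]
    intro i
    have : HasDerivAt (fun t => ∑ j, S t i j * (v t).1 j)
        (∑ j, (S' i j * (v t₀).1 j + S t₀ i j * v'.1 j)) t₀ :=
      HasDerivAt.fun_sum fun j _ => (hSij i j).mul (hv1j j)
    convert this using 1
    · rfl
    · rfl
    all_goals simp [Matrix.mulVec, dotProduct, hx, Finset.sum_add_distrib, mul_comm]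
  -- v.2 agrees with it on a neighborhood
  have heq : (fun t => (v t).2) =ᶠ[nhds t₀] (fun t => (S t).mulVec ((v t).1)) :=
    Filter.eventually_of_mem (hI.mem_nhds ht₀) hvmem
  have hv2' : HasDerivAt (fun t => (S t).mulVec ((v t).1)) v'.2 t₀ :=
    hv2.congr_of_eventuallyEq heq.symm
  have hkey : v'.2 = S'.mulVec x₀ + (S t₀).mulVec v'.1 :=
    hv2'.unique hprod
  have hsym := hSsym t₀ ht₀
  rw [hv₀]
  simp only [stdOmega, hkey]
  rw [dotProduct_add]
  have h1 : x₀ ⬝ᵥ (S t₀).mulVec v'.1 = v'.1 ⬝ᵥ (S t₀).mulVec x₀ := by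
    rw [dotProduct_mulVec, dotProduct_comm, ← mulVec_transpose, hsym]
  rw [h1]; ring
end

section
/- Let (A, B, Ā, B̄) : I → (ℝ^{n×n})⁴ solve A' = AΣ + Ā, B' = BΣ + B̄ with Σ skew-symmetric, and satisfy the symplectic relations AᵀB = BᵀA, AᵀB̄ − BᵀĀ = Id, with A invertible on I. Define S = B A^{-1}. Then S is symmetric and S' = (A Aᵀ)^{-1}; in particular S' is positive definite and Aᵀ S' A = Id. -/
open Matrix

attribute [local instance] Matrix.normedAddCommGroup Matrix.normedSpace


section aux
variable {n : ℕ}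

lemma entry_hasDerivAt {X : ℝ → Matrix (Fin n) (Fin n) ℝ} {D : Matrix (Fin n) (Fin n) ℝ}
    {t : ℝ} (h : HasDerivAt X D t) (i j : Fin n) :
    HasDerivAt (fun u => X u i j) (D i j) t := by
  have h' : HasDerivAt (fun u (a b : Fin n) => X u a b) (fun a b => D a b) t := h
  replace h' := hasDerivAt_pi.mp h'
  have := h' i
  replace this := hasDerivAt_pi.mp this
  exact this j

lemma matrix_hasDerivAt {X : ℝ → Matrix (Fin n) (Fin n) ℝ} {D : Matrix (Fin n) (Fin n) ℝ}
    {t : ℝ} (h : ∀ i j, HasDerivAt (fun u => X u i j) (D i j) t) :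
    HasDerivAt X D t := by
  show HasDerivAt (fun u (a b : Fin n) => X u a b) (fun a b => D a b) t
  refine hasDerivAt_pi.mpr ?_; intro i; refine hasDerivAt_pi.mpr ?_; exact h i

lemma inv_entry_hasDerivAt {X : ℝ → Matrix (Fin n) (Fin n) ℝ} {D : Matrix (Fin n) (Fin n) ℝ}
    {t : ℝ} (h : HasDerivAt X D t) (hu : IsUnit (X t)) (i j : Fin n) :
    HasDerivAt (fun u => (X u)⁻¹ i j) ((-((X t)⁻¹ * D * (X t)⁻¹)) i j) t := by
  have hdet : (X t).det ≠ 0 := by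
    have := (Matrix.isUnit_iff_isUnit_det _).mp hu
    exact this.ne_zero
  have hcont : ContinuousAt X t := h.continuousAt
  have hdetc : ContinuousAt (fun u => (X u).det) t :=
    (continuous_id.matrix_det.continuousAt (x := X t)).comp hcont
  have hinvc : ContinuousAt (fun u => (X u)⁻¹) t :=
    (continuousAt_matrix_inv (X t) (by
      rw [Ring.inverse_eq_inv']
      exact continuousAt_inv₀ hdet)).comp hcont
  -- eventually X u is a unit
  have hev : ∀ᶠ u in nhds t, IsUnit (X u) := by
    have : ∀ᶠ u in nhds t, (X u).det ≠ 0 := hdetc.eventually_ne hdet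
    filter_upwards [this] with u hu'
    exact (Matrix.isUnit_iff_isUnit_det _).mpr (isUnit_iff_ne_zero.mpr hu')
  rw [hasDerivAt_iff_tendsto_slope]
  have key : Filter.Tendsto
      (fun u => ((X u)⁻¹ * ((u - t)⁻¹ • (X t - X u)) * (X t)⁻¹) i j)
      (nhdsWithin t {t}ᶜ) (nhds ((-((X t)⁻¹ * D * (X t)⁻¹)) i j)) := by
    have hslope : ∀ k l, Filter.Tendsto (fun u => ((u - t)⁻¹ • (X t - X u)) k l)
        (nhdsWithin t {t}ᶜ) (nhds ((-D) k l)) := by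
      intro k l
      have := (hasDerivAt_iff_tendsto_slope.mp (entry_hasDerivAt h k l)).neg
      refine this.congr (fun u => ?_)
      simp [slope_def_field, Matrix.smul_apply, Matrix.sub_apply]
      ring
    have hic : ∀ k l, Filter.Tendsto (fun u => (X u)⁻¹ k l)
        (nhdsWithin t {t}ᶜ) (nhds ((X t)⁻¹ k l)) := by
      intro k l
      exact (((continuous_apply l).comp (continuous_apply k)).continuousAt.comp
        hinvc).tendsto.mono_left nhdsWithin_le_nhds
    simp only [Matrix.mul_apply]
    have : Filter.Tendsto
        (fun u => ∑ l, (∑ k, (X u)⁻¹ i k * ((u - t)⁻¹ • (X t - X u)) k l) * (X t)⁻¹ l j)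
        (nhdsWithin t {t}ᶜ)
        (nhds (∑ l, (∑ k, (X t)⁻¹ i k * (-D) k l) * (X t)⁻¹ l j)) := by
      refine tendsto_finset_sum _ (fun l _ => ?_)
      exact (tendsto_finset_sum _ (fun k _ => (hic i k).mul (hslope k l))).mul tendsto_const_nhds
    convert this using 2
    simp [Matrix.neg_apply, Matrix.mul_apply, Finset.sum_mul, Finset.mul_sum]
  refine key.congr' ?_
  have hev' : ∀ᶠ u in nhdsWithin t {t}ᶜ, IsUnit (X u) := nhdsWithin_le_nhds hev
  filter_upwards [hev', self_mem_nhdsWithin] with u huu hut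
  have h1 : (X u)⁻¹ * (X t - X u) * (X t)⁻¹ = (X u)⁻¹ - (X t)⁻¹ := by
    rw [mul_sub, sub_mul,
      Matrix.mul_assoc ((X u)⁻¹) (X t) ((X t)⁻¹),
      Matrix.mul_nonsing_inv _ ((Matrix.isUnit_iff_isUnit_det _).mp hu),
      Matrix.nonsing_inv_mul _ ((Matrix.isUnit_iff_isUnit_det _).mp huu)]
    simp
  have : (X u)⁻¹ * ((u - t)⁻¹ • (X t - X u)) * (X t)⁻¹
      = (u - t)⁻¹ • ((X u)⁻¹ - (X t)⁻¹) := by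
    rw [Matrix.mul_smul, Matrix.smul_mul, h1]
  rw [this]
  simp [slope_def_field, Matrix.smul_apply, Matrix.sub_apply]
  ring

end aux

/-- if `A' = AΣ + Ā`, `B' = BΣ + B̄` with `Σ` skew-symmetric, the
symplectic relations `AᵀB = BᵀA` and `AᵀB̄ − BᵀĀ = Id` hold, and `A` is invertible,
then `S = B A⁻¹` is symmetric with `S' = (AAᵀ)⁻¹`; in particular `S'` is positive
definite and `Aᵀ S' A = Id`. -/
theorem stmt15 (n : ℕ) (I : Set ℝ) (hI : IsOpen I)
    (Sg A B Ab Bb : ℝ → Matrix (Fin n) (Fin n) ℝ)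
    (hSg : ∀ t ∈ I, (Sg t)ᵀ = -(Sg t))
    (hA : ∀ t ∈ I, HasDerivAt A (A t * Sg t + Ab t) t)
    (hB : ∀ t ∈ I, HasDerivAt B (B t * Sg t + Bb t) t)
    (hsymp1 : ∀ t ∈ I, (A t)ᵀ * B t = (B t)ᵀ * A t)
    (hsymp2 : ∀ t ∈ I, (A t)ᵀ * Bb t - (B t)ᵀ * Ab t = 1)
    (hAinv : ∀ t ∈ I, IsUnit (A t)) :
    ∀ t ∈ I,
      (B t * (A t)⁻¹)ᵀ = B t * (A t)⁻¹ ∧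
      HasDerivAt (fun u => B u * (A u)⁻¹) ((A t * (A t)ᵀ)⁻¹) t ∧
      ((A t * (A t)ᵀ)⁻¹).PosDef ∧
      (A t)ᵀ * (A t * (A t)ᵀ)⁻¹ * A t = 1 := by
  intro t ht
  have hdet : IsUnit (A t).det := (Matrix.isUnit_iff_isUnit_det _).mp (hAinv t ht)
  have hdetT : IsUnit ((A t)ᵀ).det := by rwa [Matrix.det_transpose]
  have hAAinv : A t * (A t)⁻¹ = 1 := Matrix.mul_nonsing_inv _ hdet
  have hinvA : (A t)⁻¹ * A t = 1 := Matrix.nonsing_inv_mul _ hdet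
  have hATinv : (A t)ᵀ * ((A t)ᵀ)⁻¹ = 1 := Matrix.mul_nonsing_inv _ hdetT
  have hinvAT : ((A t)ᵀ)⁻¹ * (A t)ᵀ = 1 := Matrix.nonsing_inv_mul _ hdetT
  -- key algebraic identity
  have hkey : (A t)ᵀ * (Bb t - B t * (A t)⁻¹ * Ab t) = 1 := by
    have h1 : (A t)ᵀ * (B t * (A t)⁻¹) = (B t)ᵀ := by
      rw [← Matrix.mul_assoc, hsymp1 t ht, Matrix.mul_assoc, hAAinv, Matrix.mul_one]
    calc (A t)ᵀ * (Bb t - B t * (A t)⁻¹ * Ab t)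
        = (A t)ᵀ * Bb t - ((A t)ᵀ * (B t * (A t)⁻¹)) * Ab t := by
          rw [mul_sub]; simp only [Matrix.mul_assoc]
      _ = 1 := by rw [h1, hsymp2 t ht]
  have hBb : Bb t - B t * (A t)⁻¹ * Ab t = ((A t)ᵀ)⁻¹ :=
    (Matrix.inv_eq_right_inv hkey).symm
  have hAAT : (A t * (A t)ᵀ)⁻¹ = ((A t)ᵀ)⁻¹ * (A t)⁻¹ := Matrix.mul_inv_rev _ _
  -- symmetry
  have hsymm : (B t * (A t)⁻¹)ᵀ = B t * (A t)⁻¹ := by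
    rw [Matrix.transpose_mul, Matrix.transpose_nonsing_inv]
    calc ((A t)ᵀ)⁻¹ * (B t)ᵀ = ((A t)ᵀ)⁻¹ * ((B t)ᵀ * A t) * (A t)⁻¹ := by
          rw [Matrix.mul_assoc ((A t)ᵀ)⁻¹, Matrix.mul_assoc ((B t)ᵀ), hAAinv, Matrix.mul_one]
      _ = ((A t)ᵀ)⁻¹ * ((A t)ᵀ * B t) * (A t)⁻¹ := by rw [hsymp1 t ht]
      _ = B t * (A t)⁻¹ := by rw [← Matrix.mul_assoc, hinvAT, Matrix.one_mul]
  refine ⟨hsymm, ?_, ?_, ?_⟩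
  · -- derivative
    have hinv' := inv_entry_hasDerivAt (hA t ht) (hAinv t ht)
    have hB' := entry_hasDerivAt (hB t ht)
    set D : Matrix (Fin n) (Fin n) ℝ :=
      (B t * Sg t + Bb t) * (A t)⁻¹
        + B t * (-((A t)⁻¹ * (A t * Sg t + Ab t) * (A t)⁻¹)) with hD
    have hder : HasDerivAt (fun u => B u * (A u)⁻¹) D t := by
      apply matrix_hasDerivAt
      intro i j
      have : ∀ u, (B u * (A u)⁻¹) i j = ∑ k, B u i k * (A u)⁻¹ k j := by
        intro u; rw [Matrix.mul_apply]
      simp only [this]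
      have hsum : HasDerivAt (fun u => ∑ k, B u i k * (A u)⁻¹ k j)
          (∑ k, ((B t * Sg t + Bb t) i k * (A t)⁻¹ k j
            + B t i k * (-((A t)⁻¹ * (A t * Sg t + Ab t) * (A t)⁻¹)) k j)) t := by
        apply HasDerivAt.fun_sum
        intro k _
        exact (hB' i k).mul (hinv' k j)
      convert hsum using 1
      rw [hD]
      simp [Matrix.add_apply, Matrix.mul_apply, Finset.sum_add_distrib]
    have hDval : D = (A t * (A t)ᵀ)⁻¹ := by
      rw [hD, hAAT]
      have expand : (B t * Sg t + Bb t) * (A t)⁻¹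
          + B t * (-((A t)⁻¹ * (A t * Sg t + Ab t) * (A t)⁻¹))
          = (Bb t - B t * (A t)⁻¹ * Ab t) * (A t)⁻¹ := by
        have h2 : (A t)⁻¹ * (A t * Sg t + Ab t) * (A t)⁻¹
            = Sg t * (A t)⁻¹ + (A t)⁻¹ * Ab t * (A t)⁻¹ := by
          rw [mul_add, add_mul, ← Matrix.mul_assoc, hinvA, Matrix.one_mul]
        rw [h2]
        noncomm_ring
      rw [expand, hBb]
    rwa [hDval] at hder
  · -- pos def
    have hpd : (A t * (A t)ᵀ).PosDef := by
      rw [Matrix.posDef_iff_dotProduct_mulVec]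
      constructor
      · have := Matrix.isHermitian_mul_conjTranspose_self (A t)
        simpa using this
      · intro x hx
        have hy : (A t)ᵀ *ᵥ x ≠ 0 := by
          intro h0
          apply hx
          have : ((A t)ᵀ)⁻¹ *ᵥ ((A t)ᵀ *ᵥ x) = x := by
            rw [Matrix.mulVec_mulVec, hinvAT, Matrix.one_mulVec]
          rw [← this, h0, Matrix.mulVec_zero]
        set y := (A t)ᵀ *ᵥ x with hyy
        have : star x ⬝ᵥ (A t * (A t)ᵀ) *ᵥ x = y ⬝ᵥ y := by
          rw [← Matrix.mulVec_mulVec, Matrix.dotProduct_mulVec, star_trivial, hyy,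
            Matrix.mulVec_transpose]
        rw [this]
        obtain ⟨i, hi⟩ := Function.ne_iff.mp hy
        apply Finset.sum_pos' (fun k _ => mul_self_nonneg _)
        exact ⟨i, Finset.mem_univ i, mul_self_pos.mpr hi⟩
    exact hpd.inv
  · rw [hAAT, ← Matrix.mul_assoc, hATinv, Matrix.one_mul, hinvA]
end
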